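/- Let S be a family of linear subspaces of X with {0} ∈ S, let a ∈ X, a ≠ 0, and let τ_a : E_S(X) → E_S(X) be the homomorphism sending f to the limit of the translates f(· + ra), uniformly on compact sets, as r → +∞. Let χ_a : C(X̄) → ℂ be the character χ_a(f) = h_f(a/‖a‖), where h_f is the boundary function of f. Then the kernel of τ_a equals the norm closure in E_S(X) of the ideal generated by {g ∈ C(X̄) : χ_a(g) = 0}, i.e. ker τ_a is the closure of the set of finite sums Σ g_i f_i with g_i ∈ C(X̄), χ_a(g_i) = 0, and f_i ∈ E_S(X). -/

import Mathlib

open MeasureTheory Metric Filter Topology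

noncomputable section

/-- `X d` is the Euclidean space `ℝ^d` with its standard inner product and norm. -/
abbrev X (d : ℕ) : Type := EuclideanSpace ℝ (Fin d)

/-- `h` is a boundary function for `f` : `f` has uniform radial limits at infinity given
(on the unit sphere) by the continuous function `h`. -/
def IsBoundary {E : Type*} [NormedAddCommGroup E] [InnerProductSpace ℝ E]
    (f : E → ℂ) (h : E → ℂ) : Prop :=
  Continuous h ∧
    ∀ ε > 0, ∃ r > 0, ∀ z : E, r ≤ ‖z‖ → ‖f z - h (‖z‖⁻¹ • z)‖ < ε

/-- `f` has uniform radial limits at infinity. -/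
def HasUniformRadialLimits {E : Type*} [NormedAddCommGroup E] [InnerProductSpace ℝ E]
    (f : E → ℂ) : Prop :=
  ∃ h : E → ℂ, IsBoundary f h

/-- The generating set of the algebra `E_S(X)` : functions of the form `g ∘ π_Y` with `Y ∈ S`
and `g` a bounded continuous function on `Y^⊥` having uniform radial limits at infinity. -/
def projGen {E : Type*} [NormedAddCommGroup E] [InnerProductSpace ℝ E]
    [FiniteDimensional ℝ E] (S : Set (Submodule ℝ E)) :
    Set (BoundedContinuousFunction E ℂ) :=
  { f | ∃ Y ∈ S, ∃ g : BoundedContinuousFunction (↥Yᗮ) ℂ,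
      HasUniformRadialLimits ⇑g ∧ ∀ x : E, f x = g (Submodule.orthogonalProjection Yᗮ x) }

/-- `E_S(X)` : the smallest closed unital *-subalgebra of `C_b(X)` containing all `g ∘ π_Y`
with `Y ∈ S` and `g` having uniform radial limits at infinity. -/
def ES {E : Type*} [NormedAddCommGroup E] [InnerProductSpace ℝ E]
    [FiniteDimensional ℝ E] (S : Set (Submodule ℝ E)) :
    StarSubalgebra ℂ (BoundedContinuousFunction E ℂ) :=
  (StarAlgebra.adjoin ℂ (projGen S)).topologicalClosure

/-- The translates `x ↦ f(x + ra)` converge to `g` uniformly on compact subsets of `X`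
as `r → +∞`. -/
def TranslatesTendTo {d : ℕ} (a : X d) (f g : BoundedContinuousFunction (X d) ℂ) : Prop :=
  ∀ C : Set (X d), IsCompact C →
    TendstoUniformlyOn (fun (r : ℝ) (x : X d) => f (x + r • a)) (fun x => g x) atTop C

/-! ### Auxiliary lemmas -/

section AuxGeneral
variable {E : Type*} [NormedAddCommGroup E] [InnerProductSpace ℝ E]

lemma dir_smul' (t : ℝ) (ht : 0 < t) (v : E) :
    ‖t • v‖⁻¹ • (t • v) = ‖v‖⁻¹ • v := by
  rw [norm_smul, Real.norm_eq_abs, abs_of_pos ht, mul_inv, smul_smul]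
  congr 1
  rw [mul_comm t⁻¹, mul_assoc, inv_mul_cancel₀ ht.ne', mul_one]

lemma dir_sub_dir_le' (v v0 : E) (hv : v ≠ 0) (hv0 : v0 ≠ 0) :
    ‖‖v‖⁻¹ • v - ‖v0‖⁻¹ • v0‖ ≤ 2 * ‖v - v0‖ / ‖v‖ := by
  have hnv : (0:ℝ) < ‖v‖ := norm_pos_iff.mpr hv
  have hnv0 : (0:ℝ) < ‖v0‖ := norm_pos_iff.mpr hv0
  have key : ‖v‖⁻¹ • v - ‖v0‖⁻¹ • v0 = ‖v‖⁻¹ • (v - v0) + (‖v‖⁻¹ - ‖v0‖⁻¹) • v0 := by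
    rw [smul_sub, sub_smul]; abel
  rw [key]
  have h1 : ‖‖v‖⁻¹ • (v - v0)‖ = ‖v - v0‖ / ‖v‖ := by
    rw [norm_smul, Real.norm_eq_abs, abs_of_pos (by positivity)]; ring
  have h2 : ‖(‖v‖⁻¹ - ‖v0‖⁻¹) • v0‖ ≤ ‖v - v0‖ / ‖v‖ := by
    rw [norm_smul, Real.norm_eq_abs]
    have e : ‖v‖⁻¹ - ‖v0‖⁻¹ = (‖v0‖ - ‖v‖) / (‖v‖ * ‖v0‖) := by
      field_simp
    rw [e, abs_div, abs_of_pos (show (0:ℝ) < ‖v‖ * ‖v0‖ by positivity)]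
    have habs : |‖v0‖ - ‖v‖| ≤ ‖v - v0‖ := by
      rw [abs_sub_comm]
      exact (abs_norm_sub_norm_le v v0)
    calc |‖v0‖ - ‖v‖| / (‖v‖ * ‖v0‖) * ‖v0‖ = |‖v0‖ - ‖v‖| / ‖v‖ := by field_simp
      _ ≤ ‖v - v0‖ / ‖v‖ := by gcongr
  calc ‖‖v‖⁻¹ • (v - v0) + (‖v‖⁻¹ - ‖v0‖⁻¹) • v0‖
      ≤ ‖‖v‖⁻¹ • (v - v0)‖ + ‖(‖v‖⁻¹ - ‖v0‖⁻¹) • v0‖ := norm_add_le _ _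
    _ ≤ ‖v - v0‖ / ‖v‖ + ‖v - v0‖ / ‖v‖ := by rw [h1]; gcongr
    _ = 2 * ‖v - v0‖ / ‖v‖ := by ring

lemma tendsto_norm_translate' (x b : E) (hb : b ≠ 0) :
    Tendsto (fun r : ℝ => ‖x + r • b‖) atTop atTop := by
  have hnb : (0:ℝ) < ‖b‖ := norm_pos_iff.mpr hb
  apply tendsto_atTop_mono' _ (f₁ := fun r : ℝ => r * ‖b‖ - ‖x‖)
  · filter_upwards [eventually_ge_atTop (0:ℝ)] with r hr
    have h2 : ‖r • b‖ ≤ ‖x + r • b‖ + ‖x‖ := by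
      calc ‖r • b‖ = ‖(x + r • b) - x‖ := by congr 1; abel
        _ ≤ ‖x + r • b‖ + ‖x‖ := norm_sub_le _ _
    rw [norm_smul, Real.norm_eq_abs, abs_of_nonneg hr] at h2
    linarith
  · exact tendsto_atTop_add_const_right _ _ (tendsto_id.atTop_mul_const hnb)

lemma tendsto_dir' (x b : E) (hb : b ≠ 0) :
    Tendsto (fun r : ℝ => ‖x + r • b‖⁻¹ • (x + r • b)) atTop (𝓝 (‖b‖⁻¹ • b)) := by
  have hnb : (0:ℝ) < ‖b‖ := norm_pos_iff.mpr hb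
  have h1 : Tendsto (fun r : ℝ => r⁻¹ • x + b) atTop (𝓝 b) := by
    have : Tendsto (fun r : ℝ => r⁻¹ • x) atTop (𝓝 0) := by
      simpa using ((tendsto_inv_atTop_zero :
        Tendsto (fun r : ℝ => r⁻¹) atTop (𝓝 0)).smul_const x)
    simpa using this.add_const b
  have h2 : Tendsto (fun r : ℝ => ‖r⁻¹ • x + b‖) atTop (𝓝 ‖b‖) := h1.norm
  have h3 : Tendsto (fun r : ℝ => ‖r⁻¹ • x + b‖⁻¹) atTop (𝓝 ‖b‖⁻¹) := h2.inv₀ hnb.ne'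
  have h4 : Tendsto (fun r : ℝ => ‖r⁻¹ • x + b‖⁻¹ • (r⁻¹ • x + b)) atTop
      (𝓝 (‖b‖⁻¹ • b)) := h3.smul h1
  apply h4.congr'
  filter_upwards [eventually_gt_atTop (0:ℝ)] with r hr
  have hx : x + r • b = r • (r⁻¹ • x + b) := by
    rw [smul_add, smul_smul, mul_inv_cancel₀ hr.ne', one_smul]
  rw [hx, dir_smul' r hr]

/-- If `g` has boundary function `h`, translates of `g` in direction `b ≠ 0` converge
pointwise to `h (b/‖b‖)`. -/
lemma lemA (g h : E → ℂ) (hgh : IsBoundary g h) (b : E) (hb : b ≠ 0) (x : E) :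
    Tendsto (fun r : ℝ => g (x + r • b)) atTop (𝓝 (h (‖b‖⁻¹ • b))) := by
  obtain ⟨hc, hest⟩ := hgh
  have hdir := tendsto_dir' x b hb
  have hh : Tendsto (fun r : ℝ => h (‖x + r • b‖⁻¹ • (x + r • b))) atTop
      (𝓝 (h (‖b‖⁻¹ • b))) := (hc.continuousAt.tendsto).comp hdir
  have hz : Tendsto (fun r : ℝ => g (x + r • b) - h (‖x + r • b‖⁻¹ • (x + r • b)))
      atTop (𝓝 0) := by
    rw [Metric.tendsto_nhds]
    intro ε hε
    obtain ⟨R, hR, hRe⟩ := hest ε hε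
    filter_upwards [(tendsto_norm_translate' x b hb).eventually_ge_atTop R] with r hr
    simpa [dist_eq_norm] using hRe _ hr
  have := hz.add hh
  simpa using this

end AuxGeneral

section ConeBump
variable {E : Type*} [NormedAddCommGroup E] [InnerProductSpace ℝ E]

/-- Cone estimate: far away in a narrow cone around the direction of `a`, the generator
`g ∘ π_K` is close to the limit value `h (π_K a / ‖π_K a‖)`. -/
lemma cone_est [FiniteDimensional ℝ E] (K : Submodule ℝ E) (g h : ↥K → ℂ)
    (hgh : IsBoundary g h) (a : E) (hb : (Submodule.orthogonalProjection K a : ↥K) ≠ 0)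
    {ε : ℝ} (hε : 0 < ε) :
    ∃ R > 0, ∃ δ > 0, ∀ x : E, R ≤ ‖x‖ → ‖‖x‖⁻¹ • x - ‖a‖⁻¹ • a‖ ≤ δ →
      ‖g ((Submodule.orthogonalProjection K) x) -
        h (‖(Submodule.orthogonalProjection K a : ↥K)‖⁻¹ • (Submodule.orthogonalProjection K a))‖ ≤ ε := by
  obtain ⟨hc, hest⟩ := hgh
  set b : ↥K := Submodule.orthogonalProjection K a with hbdef
  have ha : a ≠ 0 := by
    intro h0
    apply hb
    rw [hbdef, h0, map_zero]
  have hna : (0:ℝ) < ‖a‖ := norm_pos_iff.mpr ha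
  have hnb : (0:ℝ) < ‖b‖ := norm_pos_iff.mpr hb
  set β : ℝ := ‖b‖ / ‖a‖ with hβdef
  have hβ : 0 < β := by positivity
  have hca : ContinuousAt h (‖b‖⁻¹ • b) := hc.continuousAt
  rw [Metric.continuousAt_iff] at hca
  obtain ⟨δ', hδ', hδ'e⟩ := hca (ε/2) (half_pos hε)
  obtain ⟨R0, hR0, hR0e⟩ := hest (ε/2) (half_pos hε)
  refine ⟨2 * R0 / β + 1, by positivity, min (β/2) (δ' * β / 9), by positivity, ?_⟩
  intro x hxR hxδ
  have hRpos : (0:ℝ) < 2 * R0 / β + 1 := by positivity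
  have hnx : (0:ℝ) < ‖x‖ := lt_of_lt_of_le hRpos hxR
  set v : ↥K := Submodule.orthogonalProjection K (‖x‖⁻¹ • x) with hvdef
  have hπx : (Submodule.orthogonalProjection K x : ↥K) = ‖x‖ • v := by
    rw [hvdef, ← _root_.map_smul]
    congr 1
    rw [smul_smul, mul_inv_cancel₀ hnx.ne', one_smul]
  set v0 : ↥K := ‖a‖⁻¹ • b with hv0def
  have hv0norm : ‖v0‖ = β := by
    rw [hv0def, norm_smul, Real.norm_eq_abs, abs_of_pos (inv_pos.mpr hna), hβdef,
      inv_mul_eq_div]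
  have hv00 : v0 ≠ 0 := by
    rw [← norm_pos_iff, hv0norm]
    exact hβ
  have hvv0 : ‖v - v0‖ ≤ min (β/2) (δ' * β / 9) := by
    have he : v - v0 = Submodule.orthogonalProjection K (‖x‖⁻¹ • x - ‖a‖⁻¹ • a) := by
      rw [map_sub, _root_.map_smul (Submodule.orthogonalProjection K) (‖a‖⁻¹) a,
        hvdef, hv0def, hbdef]
    rw [he]
    calc ‖(Submodule.orthogonalProjection K) (‖x‖⁻¹ • x - ‖a‖⁻¹ • a)‖
        ≤ ‖(Submodule.orthogonalProjection K : E →L[ℝ] ↥K)‖ * ‖‖x‖⁻¹ • x - ‖a‖⁻¹ • a‖ :=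
          ContinuousLinearMap.le_opNorm _ _
      _ ≤ 1 * ‖‖x‖⁻¹ • x - ‖a‖⁻¹ • a‖ :=
          mul_le_mul_of_nonneg_right (Submodule.orthogonalProjection_norm_le K) (norm_nonneg _)
      _ = ‖‖x‖⁻¹ • x - ‖a‖⁻¹ • a‖ := one_mul _
      _ ≤ min (β/2) (δ' * β / 9) := hxδ
  have hvv0' : ‖v - v0‖ ≤ β/2 := le_trans hvv0 (min_le_left _ _)
  have hvnorm : β/2 ≤ ‖v‖ := by
    have h1 : ‖v0‖ - ‖v‖ ≤ ‖v - v0‖ := by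
      rw [norm_sub_rev]
      exact norm_sub_norm_le v0 v
    rw [hv0norm] at h1
    linarith
  have hv0' : v ≠ 0 := by
    rw [← norm_pos_iff]
    linarith
  have hπnorm : R0 ≤ ‖(Submodule.orthogonalProjection K x : ↥K)‖ := by
    rw [hπx, norm_smul, Real.norm_eq_abs, abs_of_pos hnx]
    have he : (2 * R0 / β + 1) * (β/2) = R0 + β/2 := by
      field_simp
    have h2 : (2 * R0 / β + 1) * (β/2) ≤ ‖x‖ * ‖v‖ :=
      mul_le_mul hxR hvnorm (by positivity) (norm_nonneg x)
    linarith
  have hest1 := hR0e _ hπnorm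
  have hdir : ‖(Submodule.orthogonalProjection K x : ↥K)‖⁻¹ • (Submodule.orthogonalProjection K x : ↥K)
      = ‖v‖⁻¹ • v := by
    rw [hπx, dir_smul' ‖x‖ hnx]
  have hdirb : ‖b‖⁻¹ • b = ‖v0‖⁻¹ • v0 := by
    rw [hv0def, dir_smul' (‖a‖⁻¹) (inv_pos.mpr hna)]
  have hdd : ‖‖v‖⁻¹ • v - ‖v0‖⁻¹ • v0‖ ≤ 2 * ‖v - v0‖ / ‖v‖ :=
    dir_sub_dir_le' v v0 hv0' hv00
  have hdd2 : 2 * ‖v - v0‖ / ‖v‖ < δ' := by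
    have h1 : ‖v - v0‖ ≤ δ' * β / 9 := le_trans hvv0 (min_le_right _ _)
    have hβ2 : (0:ℝ) < β/2 := by positivity
    calc 2 * ‖v - v0‖ / ‖v‖ ≤ 2 * (δ' * β / 9) / (β/2) := by gcongr
      _ = 4 * δ' / 9 := by
          field_simp
          ring
      _ < δ' := by linarith
  have hest2 : dist (h (‖v‖⁻¹ • v)) (h (‖b‖⁻¹ • b)) < ε/2 := by
    apply hδ'e
    rw [dist_eq_norm, hdirb]
    exact lt_of_le_of_lt hdd hdd2
  rw [hdir] at hest1
  calc ‖g ((Submodule.orthogonalProjection K) x) - h (‖b‖⁻¹ • b)‖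
      = dist (g ((Submodule.orthogonalProjection K) x)) (h (‖b‖⁻¹ • b)) := (dist_eq_norm _ _).symm
    _ ≤ dist (g ((Submodule.orthogonalProjection K) x)) (h (‖v‖⁻¹ • v))
        + dist (h (‖v‖⁻¹ • v)) (h (‖b‖⁻¹ • b)) := dist_triangle _ _ _
    _ ≤ ε/2 + ε/2 := by
        rw [dist_eq_norm]
        exact add_le_add (le_of_lt hest1) (le_of_lt hest2)
    _ = ε := by ring


/-- radial cutoff -/
def rhoCut (R t : ℝ) : ℝ := min 1 (max 0 (t - R))

/-- angular cutoff -/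
def sigCut (δ s : ℝ) : ℝ := max 0 (1 - s/δ)

lemma rhoCut_cont (R : ℝ) : Continuous (rhoCut R) :=
  continuous_const.min (continuous_const.max (continuous_id.sub continuous_const))

lemma sigCut_cont (δ : ℝ) : Continuous (sigCut δ) :=
  continuous_const.max (continuous_const.sub (continuous_id.div_const δ))

lemma rhoCut_nonneg (R t : ℝ) : 0 ≤ rhoCut R t :=
  le_min zero_le_one (le_max_left _ _)

lemma rhoCut_le_one (R t : ℝ) : rhoCut R t ≤ 1 := min_le_left _ _

lemma rhoCut_eq_zero {R t : ℝ} (h : t ≤ R) : rhoCut R t = 0 := by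
  rw [rhoCut, max_eq_left (by linarith : t - R ≤ 0), min_eq_right zero_le_one]

lemma rhoCut_eq_one {R t : ℝ} (h : R + 1 ≤ t) : rhoCut R t = 1 := by
  rw [rhoCut, min_eq_left (le_max_of_le_right (by linarith : (1:ℝ) ≤ t - R))]

lemma rhoCut_ne_zero {R t : ℝ} (h : rhoCut R t ≠ 0) : R ≤ t := by
  by_contra hcon
  push_neg at hcon
  exact h (rhoCut_eq_zero hcon.le)

lemma sigCut_nonneg (δ s : ℝ) : 0 ≤ sigCut δ s := le_max_left _ _

lemma sigCut_le_one {δ s : ℝ} (hδ : 0 < δ) (hs : 0 ≤ s) : sigCut δ s ≤ 1 :=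
  max_le zero_le_one (sub_le_self _ (div_nonneg hs hδ.le))

lemma sigCut_zero {δ : ℝ} : sigCut δ 0 = 1 := by
  rw [sigCut, zero_div, sub_zero, max_eq_right zero_le_one]

lemma sigCut_ne_zero {δ s : ℝ} (hδ : 0 < δ) (h : sigCut δ s ≠ 0) : s ≤ δ := by
  by_contra hcon
  push_neg at hcon
  apply h
  rw [sigCut, max_eq_left]
  have h1 : (1:ℝ) < s / δ := (one_lt_div hδ).mpr hcon
  linarith

/-- Existence of a cone bump function with uniform radial limits, boundary value `1` at
the direction of `a`, and support in the far cone. -/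
lemma bump_exists (a : E) (ha : a ≠ 0) (R δ : ℝ) (hR : 0 < R) (hδ : 0 < δ) :
    ∃ w : BoundedContinuousFunction E ℂ, ∃ hwb : E → ℂ,
      IsBoundary ⇑w hwb ∧ hwb (‖a‖⁻¹ • a) = 1 ∧ (∀ x, ‖w x‖ ≤ 1) ∧
      ∀ x : E, w x ≠ 0 → R ≤ ‖x‖ ∧ ‖‖x‖⁻¹ • x - ‖a‖⁻¹ • a‖ ≤ δ := by
  set q : E → ℝ := fun x => rhoCut R ‖x‖ * sigCut δ ‖‖x‖⁻¹ • x - ‖a‖⁻¹ • a‖ with hqdef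
  have hqcont : Continuous q := by
    rw [continuous_iff_continuousAt]
    intro x0
    rcases lt_or_ge ‖x0‖ R with hlt | hge
    · have hev : q =ᶠ[nhds x0] fun _ => 0 := by
        filter_upwards [Metric.ball_mem_nhds x0 (show (0:ℝ) < R - ‖x0‖ by linarith)] with x hx
        have hxn : ‖x‖ < R := by
          have h1 : ‖x‖ - ‖x0‖ ≤ ‖x - x0‖ := norm_sub_norm_le _ _
          rw [Metric.mem_ball, dist_eq_norm] at hx
          linarith
        show q x = 0
        rw [hqdef]
        simp only
        rw [rhoCut_eq_zero hxn.le, zero_mul]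
      exact hev.continuousAt
    · have hx0 : x0 ≠ 0 := by
        intro h0
        rw [h0, norm_zero] at hge
        linarith
      have h1 : ContinuousAt (fun x : E => ‖x‖⁻¹ • x) x0 :=
        ((continuous_norm.continuousAt).inv₀ (norm_ne_zero_iff.mpr hx0)).smul continuousAt_id
      exact (((rhoCut_cont R).continuousAt).comp continuous_norm.continuousAt).mul
        (((sigCut_cont δ).continuousAt).comp ((h1.sub continuousAt_const).norm))
  have hq01 : ∀ x, 0 ≤ q x ∧ q x ≤ 1 := by
    intro x
    constructor
    · exact mul_nonneg (rhoCut_nonneg _ _) (sigCut_nonneg _ _)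
    · calc q x ≤ 1 * 1 :=
          mul_le_mul (rhoCut_le_one _ _) (sigCut_le_one hδ (norm_nonneg _))
            (sigCut_nonneg _ _) zero_le_one
        _ = 1 := one_mul _
  have hqabs : ∀ x, |q x| ≤ 1 := fun x => by
    rw [abs_of_nonneg (hq01 x).1]
    exact (hq01 x).2
  refine ⟨BoundedContinuousFunction.ofNormedAddCommGroup (fun x => (q x : ℂ))
      (Complex.continuous_ofReal.comp hqcont) 1 (fun x => by simpa using hqabs x),
    fun y => ((sigCut δ ‖y - ‖a‖⁻¹ • a‖ : ℝ) : ℂ), ⟨?_, ?_⟩, ?_, ?_, ?_⟩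
  · exact Complex.continuous_ofReal.comp
      ((sigCut_cont δ).comp ((continuous_id.sub continuous_const).norm))
  · intro ε hε
    refine ⟨R + 1, by linarith, fun z hz => ?_⟩
    have hρ1 : rhoCut R ‖z‖ = 1 := rhoCut_eq_one hz
    show ‖((q z : ℝ) : ℂ) - ((sigCut δ ‖(‖z‖⁻¹ • z) - ‖a‖⁻¹ • a‖ : ℝ) : ℂ)‖ < ε
    have he : q z = sigCut δ ‖(‖z‖⁻¹ • z) - ‖a‖⁻¹ • a‖ := by
      rw [hqdef]
      simp only
      rw [hρ1, one_mul]
    rw [he, sub_self, norm_zero]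
    exact hε
  · show ((sigCut δ ‖(‖a‖⁻¹ • a) - ‖a‖⁻¹ • a‖ : ℝ) : ℂ) = 1
    rw [sub_self, norm_zero, sigCut_zero]
    simp
  · intro x
    show ‖((q x : ℝ) : ℂ)‖ ≤ 1
    simpa using hqabs x
  · intro x hwx
    have hq0 : q x ≠ 0 := by
      intro h0
      apply hwx
      show ((q x : ℝ) : ℂ) = 0
      rw [h0]
      simp
    have hρ0 : rhoCut R ‖x‖ ≠ 0 := by
      intro h0
      apply hq0
      rw [hqdef]
      simp only
      rw [h0, zero_mul]
    have hσ0 : sigCut δ ‖‖x‖⁻¹ • x - ‖a‖⁻¹ • a‖ ≠ 0 := by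
      intro h0
      apply hq0
      rw [hqdef]
      simp only
      rw [h0, mul_zero]
    exact ⟨rhoCut_ne_zero hρ0, sigCut_ne_zero hδ hσ0⟩


end ConeBump

section Main

variable {d : ℕ} {S : Set (Submodule ℝ (X d))} {a : X d}

/-- The (not yet closed) ideal generated by functions with boundary value `0` at `a/‖a‖`. -/
def Jset (S : Set (Submodule ℝ (X d))) (a : X d) : Set ↥(ES S) :=
  {f : ↥(ES S) | ∃ (m : ℕ) (g u : Fin m → ↥(ES S)),
    (∀ i, ∃ h : X d → ℂ,
      IsBoundary (⇑(g i : BoundedContinuousFunction (X d) ℂ)) h ∧ h (‖a‖⁻¹ • a) = 0) ∧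
    f = ∑ i, g i * u i}

lemma tau_apply (τ : ↥(ES S) →⋆ₐ[ℂ] ↥(ES S))
    (hτ : ∀ f : ↥(ES S), TranslatesTendTo a (↑f) (↑(τ f))) (f : ↥(ES S)) (x : X d) :
    Tendsto (fun r : ℝ => (f : BoundedContinuousFunction (X d) ℂ) (x + r • a)) atTop
      (𝓝 ((τ f : BoundedContinuousFunction (X d) ℂ) x)) :=
  (hτ f {x} isCompact_singleton).tendsto_at rfl

lemma tau_norm_le (τ : ↥(ES S) →⋆ₐ[ℂ] ↥(ES S))
    (hτ : ∀ f : ↥(ES S), TranslatesTendTo a (↑f) (↑(τ f))) (f : ↥(ES S)) :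
    ‖τ f‖ ≤ ‖f‖ := by
  show ‖(τ f : BoundedContinuousFunction (X d) ℂ)‖ ≤ ‖f‖
  refine (BoundedContinuousFunction.norm_le (norm_nonneg f)).mpr fun x => ?_
  refine le_of_tendsto ((tau_apply τ hτ f x).norm) ?_
  filter_upwards with r
  exact BoundedContinuousFunction.norm_coe_le_norm _ _

lemma tau_continuous (τ : ↥(ES S) →⋆ₐ[ℂ] ↥(ES S))
    (hτ : ∀ f : ↥(ES S), TranslatesTendTo a (↑f) (↑(τ f))) :
    Continuous τ := by
  refine (LipschitzWith.of_dist_le_mul (K := 1) fun f g => ?_).continuous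
  rw [dist_eq_norm, dist_eq_norm, ← map_sub, NNReal.coe_one, one_mul]
  exact tau_norm_le τ hτ _

lemma tau_eq_zero (ha : a ≠ 0) (τ : ↥(ES S) →⋆ₐ[ℂ] ↥(ES S))
    (hτ : ∀ f : ↥(ES S), TranslatesTendTo a (↑f) (↑(τ f))) (g : ↥(ES S)) (h : X d → ℂ)
    (hgh : IsBoundary (⇑(g : BoundedContinuousFunction (X d) ℂ)) h)
    (h0 : h (‖a‖⁻¹ • a) = 0) : τ g = 0 := by
  apply Subtype.ext
  ext x
  have h1 := tau_apply τ hτ g x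
  have h2 := lemA _ h hgh a ha x
  rw [h0] at h2
  have := tendsto_nhds_unique h1 h2
  simpa using this

lemma J_subset_ker (ha : a ≠ 0) (τ : ↥(ES S) →⋆ₐ[ℂ] ↥(ES S))
    (hτ : ∀ f : ↥(ES S), TranslatesTendTo a (↑f) (↑(τ f))) :
    Jset S a ⊆ {f : ↥(ES S) | τ f = 0} := by
  rintro f ⟨m, g, u, hg, rfl⟩
  show τ _ = 0
  rw [map_sum]
  refine Finset.sum_eq_zero fun i _ => ?_
  obtain ⟨h, hgh, h0⟩ := hg i
  rw [map_mul, tau_eq_zero ha τ hτ (g i) h hgh h0, zero_mul]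

/-- Any bounded continuous function with uniform radial limits belongs to `E_S(X)`,
provided `⊥ ∈ S`. -/
lemma mem_ES_of_radial (h0S : (⊥ : Submodule ℝ (X d)) ∈ S)
    (w : BoundedContinuousFunction (X d) ℂ) (hw : HasUniformRadialLimits ⇑w) :
    w ∈ ES S := by
  apply StarSubalgebra.le_topologicalClosure _
  apply StarAlgebra.subset_adjoin
  refine ⟨⊥, h0S, w.compContinuous ⟨Subtype.val, continuous_subtype_val⟩, ?_, ?_⟩
  · obtain ⟨h, hc, hest⟩ := hw
    refine ⟨fun z => h ↑z, hc.comp continuous_subtype_val, ?_⟩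
    intro ε hε
    obtain ⟨r, hr, hre⟩ := hest ε hε
    refine ⟨r, hr, fun z hz => ?_⟩
    have h1 := hre ↑z (by rwa [← Submodule.coe_norm])
    simpa [Submodule.coe_norm] using h1
  · intro x
    have hx : x ∈ (⊥ : Submodule ℝ (X d))ᗮ := by
      simp [Submodule.mem_orthogonal]
    show w x = w ↑((Submodule.orthogonalProjection (⊥ᗮ : Submodule ℝ (X d))) x)
    rw [show ((Submodule.orthogonalProjection (⊥ᗮ : Submodule ℝ (X d))) x : X d) = x from
      Submodule.starProjection_eq_self_iff.mpr hx]

lemma J_zero : (0 : ↥(ES S)) ∈ Jset S a :=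
  ⟨0, fun i => 0, fun i => 0, fun i => i.elim0, by simp⟩

lemma J_add {p q : ↥(ES S)} (hp : p ∈ Jset S a) (hq : q ∈ Jset S a) :
    p + q ∈ Jset S a := by
  obtain ⟨m, g, u, hg, rfl⟩ := hp
  obtain ⟨n, g', u', hg', rfl⟩ := hq
  refine ⟨m + n, Fin.append g g', Fin.append u u', ?_, ?_⟩
  · intro i
    refine Fin.addCases ?_ ?_ i
    · intro j
      rw [Fin.append_left]
      exact hg j
    · intro j
      rw [Fin.append_right]
      exact hg' j
  · rw [Fin.sum_univ_add]
    simp only [Fin.append_left, Fin.append_right]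

lemma J_mul {p : ↥(ES S)} (hp : p ∈ Jset S a) (v : ↥(ES S)) : p * v ∈ Jset S a := by
  obtain ⟨m, g, u, hg, rfl⟩ := hp
  exact ⟨m, g, fun i => u i * v, hg, by rw [Finset.sum_mul]; simp [mul_assoc]⟩

lemma J_star {p : ↥(ES S)} (hp : p ∈ Jset S a) : star p ∈ Jset S a := by
  obtain ⟨m, g, u, hg, rfl⟩ := hp
  refine ⟨m, fun i => star (g i), fun i => star (u i), ?_, ?_⟩
  · intro i
    obtain ⟨h, ⟨hc, hest⟩, h0⟩ := hg i
    refine ⟨fun y => starRingEnd ℂ (h y), ⟨continuous_star.comp hc, ?_⟩, by simp [h0]⟩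
    intro ε hε
    obtain ⟨r, hr, hre⟩ := hest ε hε
    refine ⟨r, hr, fun z hz => ?_⟩
    have h1 := hre z hz
    calc ‖((star (g i) : ↥(ES S)) : BoundedContinuousFunction (X d) ℂ) z -
          (fun y => starRingEnd ℂ (h y)) (‖z‖⁻¹ • z)‖
        = ‖starRingEnd ℂ (((g i : ↥(ES S)) : BoundedContinuousFunction (X d) ℂ) z
            - h (‖z‖⁻¹ • z))‖ := by rw [map_sub]; rfl
      _ = ‖((g i : ↥(ES S)) : BoundedContinuousFunction (X d) ℂ) z - h (‖z‖⁻¹ • z)‖ :=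
          RCLike.norm_conj _
      _ < ε := h1
  · rw [star_sum]
    refine Finset.sum_congr rfl fun i _ => ?_
    rw [star_mul, mul_comm]

end Main

section Main2

variable {d : ℕ} {S : Set (Submodule ℝ (X d))} {a : X d}

lemma norm_coe_ES (f : ↥(ES S)) : ‖f‖ = ‖(f : BoundedContinuousFunction (X d) ℂ)‖ := rfl

lemma I_add {p q : ↥(ES S)} (hp : p ∈ closure (Jset S a)) (hq : q ∈ closure (Jset S a)) :
    p + q ∈ closure (Jset S a) := by
  rw [Metric.mem_closure_iff] at hp hq ⊢
  intro ε hε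
  obtain ⟨p', hp', hdp⟩ := hp (ε/2) (by linarith)
  obtain ⟨q', hq', hdq⟩ := hq (ε/2) (by linarith)
  refine ⟨p' + q', J_add hp' hq', ?_⟩
  calc dist (p + q) (p' + q') ≤ dist p p' + dist q q' := dist_add_add_le _ _ _ _
    _ < ε := by linarith

lemma I_mul {p : ↥(ES S)} (hp : p ∈ closure (Jset S a)) (v : ↥(ES S)) :
    p * v ∈ closure (Jset S a) := by
  rw [Metric.mem_closure_iff] at hp ⊢
  intro ε hε
  have hv1 : (0:ℝ) < ‖v‖ + 1 := by positivity
  obtain ⟨p', hp', hdp⟩ := hp (ε / (‖v‖ + 1)) (by positivity)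
  refine ⟨p' * v, J_mul hp' v, ?_⟩
  rw [dist_eq_norm] at hdp ⊢
  calc ‖p * v - p' * v‖ = ‖(p - p') * v‖ := by rw [sub_mul]
    _ ≤ ‖p - p'‖ * ‖v‖ := norm_mul_le _ _
    _ ≤ ‖p - p'‖ * (‖v‖ + 1) := by
        have := norm_nonneg (p - p'); nlinarith [norm_nonneg v]
    _ < ε / (‖v‖ + 1) * (‖v‖ + 1) := by
        exact mul_lt_mul_of_pos_right hdp hv1
    _ = ε := div_mul_cancel₀ _ hv1.ne'

lemma norm_star_ES (p : ↥(ES S)) : ‖star p‖ = ‖p‖ := by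
  rw [norm_coe_ES, norm_coe_ES]
  exact norm_star (p : BoundedContinuousFunction (X d) ℂ)

lemma I_star {p : ↥(ES S)} (hp : p ∈ closure (Jset S a)) :
    star p ∈ closure (Jset S a) := by
  rw [Metric.mem_closure_iff] at hp ⊢
  intro ε hε
  obtain ⟨p', hp', hdp⟩ := hp ε hε
  refine ⟨star p', J_star hp', ?_⟩
  rw [dist_eq_norm] at hdp ⊢
  calc ‖star p - star p'‖ = ‖star (p - p')‖ := by rw [star_sub]
    _ = ‖p - p'‖ := norm_star_ES _
    _ < ε := hdp

set_option maxHeartbeats 2000000 in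
/-- The key generator lemma : for `u ∈ projGen S`, `u - τ u` lies in the closed ideal. -/
lemma gen_diff_mem (h0S : (⊥ : Submodule ℝ (X d)) ∈ S) (ha : a ≠ 0)
    (τ : ↥(ES S) →⋆ₐ[ℂ] ↥(ES S))
    (hτ : ∀ f : ↥(ES S), TranslatesTendTo a (↑f) (↑(τ f)))
    (u : BoundedContinuousFunction (X d) ℂ) (hu : u ∈ projGen S) (huE : u ∈ ES S) :
    (⟨u, huE⟩ - τ ⟨u, huE⟩ : ↥(ES S)) ∈ closure (Jset S a) := by
  obtain ⟨Y, hY, g, ⟨h, hgh⟩, hrep⟩ := hu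
  by_cases hb : (Submodule.orthogonalProjection Yᗮ a : ↥Yᗮ) = 0
  · -- invariant generator : τ u = u
    have hfix : τ ⟨u, huE⟩ = ⟨u, huE⟩ := by
      apply Subtype.ext
      ext x
      have h1 := tau_apply τ hτ ⟨u, huE⟩ x
      have h2 : ∀ r : ℝ, ((⟨u, huE⟩ : ↥(ES S)) : BoundedContinuousFunction (X d) ℂ)
          (x + r • a) = u x := by
        intro r
        show u (x + r • a) = u x
        rw [hrep, hrep]
        congr 1
        rw [map_add, _root_.map_smul, hb, smul_zero, add_zero]
      exact tendsto_nhds_unique (h1.congr h2) tendsto_const_nhds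
    rw [hfix, sub_self]
    exact subset_closure J_zero
  · set b : ↥Yᗮ := Submodule.orthogonalProjection Yᗮ a with hbdef
    set c : ℂ := h (‖b‖⁻¹ • b) with hcdef
    have hτu : τ ⟨u, huE⟩ = algebraMap ℂ ↥(ES S) c := by
      apply Subtype.ext
      ext x
      have h1 := tau_apply τ hτ ⟨u, huE⟩ x
      have h2 : ∀ r : ℝ, ((⟨u, huE⟩ : ↥(ES S)) : BoundedContinuousFunction (X d) ℂ)
          (x + r • a) = g (Submodule.orthogonalProjection Yᗮ x + r • b) := by
        intro r
        show u (x + r • a) = _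
        rw [hrep]
        congr 1
        rw [map_add, _root_.map_smul, hbdef]
      have h3 := lemA ⇑g h hgh b hb (Submodule.orthogonalProjection Yᗮ x)
      have h4 := tendsto_nhds_unique (h1.congr h2) h3
      rw [h4]
      simp [hcdef]
    rw [hτu, Metric.mem_closure_iff]
    intro ε hε
    obtain ⟨R, hR, δ, hδ, hcone⟩ := cone_est Yᗮ ⇑g h hgh a hb (half_pos hε)
    obtain ⟨w, hwb, hwIsB, hwa1, hwle, hwsupp⟩ := bump_exists a ha R δ hR hδ
    have hwES : w ∈ ES S := mem_ES_of_radial h0S w ⟨hwb, hwIsB⟩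
    have hWES : (1 : BoundedContinuousFunction (X d) ℂ) - w ∈ ES S :=
      sub_mem (one_mem _) hwES
    have hUES : u - algebraMap ℂ (BoundedContinuousFunction (X d) ℂ) c ∈ ES S :=
      sub_mem huE (StarSubalgebra.algebraMap_mem _ c)
    set W' : ↥(ES S) := ⟨(1 : BoundedContinuousFunction (X d) ℂ) - w, hWES⟩ with hW'def
    set U' : ↥(ES S) := ⟨u - algebraMap ℂ (BoundedContinuousFunction (X d) ℂ) c, hUES⟩
      with hU'def
    have hUeq : (⟨u, huE⟩ - algebraMap ℂ ↥(ES S) c : ↥(ES S)) = U' := by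
      apply Subtype.ext
      rfl
    rw [hUeq]
    refine ⟨W' * U', ?_, ?_⟩
    · refine ⟨1, fun _ => W', fun _ => U', ?_, by simp⟩
      intro i
      refine ⟨fun y => 1 - hwb y, ⟨?_, ?_⟩, by simp [hwa1]⟩
      · exact continuous_const.sub hwIsB.1
      · intro ε' hε'
        obtain ⟨r, hr, hre⟩ := hwIsB.2 ε' hε'
        refine ⟨r, hr, fun z hz => ?_⟩
        have h1 := hre z hz
        have e2 : ((W' : ↥(ES S)) : BoundedContinuousFunction (X d) ℂ) z
            = 1 - w z := by
          rw [hW'def]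
          simp
        calc ‖((W' : ↥(ES S)) : BoundedContinuousFunction (X d) ℂ) z -
              (fun y => 1 - hwb y) (‖z‖⁻¹ • z)‖
            = ‖(1 - w z) - (1 - hwb (‖z‖⁻¹ • z))‖ := by rw [e2]
          _ = ‖-(w z - hwb (‖z‖⁻¹ • z))‖ := by ring_nf
          _ = ‖w z - hwb (‖z‖⁻¹ • z)‖ := norm_neg _
          _ < ε' := h1
    · rw [dist_eq_norm]
      set Wc : ↥(ES S) := ⟨w, hwES⟩ with hWcdef
      have he : U' - W' * U' = Wc * U' := by
        apply Subtype.ext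
        show ((U' : BoundedContinuousFunction (X d) ℂ) - (W' : BoundedContinuousFunction (X d) ℂ)
          * (U' : BoundedContinuousFunction (X d) ℂ)) = (Wc : BoundedContinuousFunction (X d) ℂ)
          * (U' : BoundedContinuousFunction (X d) ℂ)
        rw [hW'def, hU'def, hWcdef]
        ring
      rw [he]
      have hbound : ‖Wc * U'‖ ≤ ε/2 := by
        rw [norm_coe_ES]
        refine (BoundedContinuousFunction.norm_le (by positivity)).mpr fun x => ?_
        have happ : ((Wc * U' : ↥(ES S)) : BoundedContinuousFunction (X d) ℂ) x
            = w x * (u x - c) := by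
          rw [MulMemClass.coe_mul, hWcdef, hU'def]
          rw [BoundedContinuousFunction.mul_apply]
          show w x * ((u - algebraMap ℂ (BoundedContinuousFunction (X d) ℂ) c) x) = _
          simp
        rw [happ]
        by_cases hwx : w x = 0
        · rw [hwx, zero_mul, norm_zero]
          positivity
        · obtain ⟨hx1, hx2⟩ := hwsupp x hwx
          have hcx := hcone x hx1 hx2
          rw [hrep x]
          calc ‖w x * (g ((Submodule.orthogonalProjection Yᗮ) x) - c)‖
              = ‖w x‖ * ‖g ((Submodule.orthogonalProjection Yᗮ) x) - c‖ := norm_mul _ _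
            _ ≤ 1 * (ε/2) := mul_le_mul (hwle x) hcx (norm_nonneg _) zero_le_one
            _ = ε/2 := one_mul _
      linarith [hbound]

end Main2

section Main3

variable {d : ℕ} {S : Set (Submodule ℝ (X d))} {a : X d}

set_option maxHeartbeats 2000000 in
set_option synthInstance.maxHeartbeats 1000000 in
/-- For every element `p` of the *-algebra generated by the projections,
`p - τ p` lies in the closed ideal. -/
lemma adjoin_diff_mem (h0S : (⊥ : Submodule ℝ (X d)) ∈ S) (ha : a ≠ 0)
    (τ : ↥(ES S) →⋆ₐ[ℂ] ↥(ES S))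
    (hτ : ∀ f : ↥(ES S), TranslatesTendTo a (↑f) (↑(τ f)))
    (p : ↥(StarAlgebra.adjoin ℂ (projGen S))) :
    (StarSubalgebra.inclusion
        (show StarAlgebra.adjoin ℂ (projGen S) ≤ ES S from
          StarSubalgebra.le_topologicalClosure _) p) -
      τ (StarSubalgebra.inclusion
        (show StarAlgebra.adjoin ℂ (projGen S) ≤ ES S from
          StarSubalgebra.le_topologicalClosure _) p) ∈ closure (Jset S a) := by
  set ι := StarSubalgebra.inclusion
    (show StarAlgebra.adjoin ℂ (projGen S) ≤ ES S from
      StarSubalgebra.le_topologicalClosure _) with hιdef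
  induction p using StarAlgebra.adjoin_induction_subtype with
  | mem x hx =>
      have hxE : x ∈ ES S := StarSubalgebra.le_topologicalClosure _
        (StarAlgebra.subset_adjoin ℂ _ hx)
      have : ι ⟨x, StarAlgebra.subset_adjoin ℂ _ hx⟩ = ⟨x, hxE⟩ := Subtype.ext rfl
      rw [this]
      exact gen_diff_mem h0S ha τ hτ x hx hxE
  | algebraMap r =>
      rw [AlgHomClass.commutes, AlgHomClass.commutes, sub_self]
      exact subset_closure J_zero
  | add x y hx hy =>
      rw [map_add, map_add]
      have he : ι x + ι y - (τ (ι x) + τ (ι y))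
          = (ι x - τ (ι x)) + (ι y - τ (ι y)) := by abel
      rw [he]
      exact I_add hx hy
  | mul x y hx hy =>
      rw [map_mul, map_mul]
      have he : ι x * ι y - τ (ι x) * τ (ι y)
          = (ι y - τ (ι y)) * ι x + (ι x - τ (ι x)) * τ (ι y) := by ring
      rw [he]
      exact I_add (I_mul hy (ι x)) (I_mul hx (τ (ι y)))
  | star x hx =>
      rw [map_star, map_star]
      have he : star (ι x) - star (τ (ι x)) = star (ι x - τ (ι x)) := by
        apply Subtype.ext
        show star ((ι x : BoundedContinuousFunction (X d) ℂ)) -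
            star ((τ (ι x) : BoundedContinuousFunction (X d) ℂ))
          = star ((ι x : BoundedContinuousFunction (X d) ℂ) -
            (τ (ι x) : BoundedContinuousFunction (X d) ℂ))
        rw [star_sub]
      rw [he]
      exact I_star hx

end Main3

set_option maxHeartbeats 4000000
set_option synthInstance.maxHeartbeats 1000000

/-- Let `S` be a family of subspaces of `X` with `{0} ∈ S`, `a ≠ 0`, and let
`τ = τ_a : E_S(X) → E_S(X)` be the homomorphism sending `f` to the limit of its translates
`f(· + ra)` (uniformly on compact sets, as `r → +∞`). Then `ker τ_a` equals the norm closure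
in `E_S(X)` of the ideal generated by `{g ∈ C(X̄) : χ_a(g) = 0}`, i.e. the closure of the set
of finite sums `Σ gᵢ fᵢ` with `gᵢ ∈ C(X̄)`, `χ_a(gᵢ) = h_{gᵢ}(a/‖a‖) = 0`, and
`fᵢ ∈ E_S(X)`. -/
theorem ker_tau_eq_closure_ideal (d : ℕ) (hd : 1 ≤ d) (S : Set (Submodule ℝ (X d)))
    (h0 : (⊥ : Submodule ℝ (X d)) ∈ S) (a : X d) (ha : a ≠ 0)
    (τ : ↥(ES S) →⋆ₐ[ℂ] ↥(ES S))
    (hτ : ∀ f : ↥(ES S), TranslatesTendTo a (↑f) (↑(τ f))) :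
    {f : ↥(ES S) | τ f = 0} =
      closure {f : ↥(ES S) | ∃ (m : ℕ) (g u : Fin m → ↥(ES S)),
        (∀ i, ∃ h : X d → ℂ,
          IsBoundary (⇑(g i : BoundedContinuousFunction (X d) ℂ)) h ∧ h (‖a‖⁻¹ • a) = 0) ∧
        f = ∑ i, g i * u i} := by
  have hJ : {f : ↥(ES S) | ∃ (m : ℕ) (g u : Fin m → ↥(ES S)),
      (∀ i, ∃ h : X d → ℂ,
        IsBoundary (⇑(g i : BoundedContinuousFunction (X d) ℂ)) h ∧ h (‖a‖⁻¹ • a) = 0) ∧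
      f = ∑ i, g i * u i} = Jset S a := rfl
  rw [hJ]
  apply Set.Subset.antisymm
  · -- kernel ⊆ closed ideal
    intro f hf
    have hf0 : τ f = 0 := hf
    rw [← closure_closure (s := Jset S a), Metric.mem_closure_iff]
    intro ε hε
    have hf2 : (f : BoundedContinuousFunction (X d) ℂ) ∈
        closure (StarAlgebra.adjoin ℂ (projGen S) : Set (BoundedContinuousFunction (X d) ℂ)) :=
      f.2
    rw [Metric.mem_closure_iff] at hf2
    obtain ⟨p, hpmem, hpdist⟩ := hf2 (ε/3) (by linarith)
    have hpES : p ∈ ES S :=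
      (show StarAlgebra.adjoin ℂ (projGen S) ≤ ES S from
        StarSubalgebra.le_topologicalClosure _) hpmem
    have hq := adjoin_diff_mem h0 ha τ hτ ⟨p, hpmem⟩
    set ι := StarSubalgebra.inclusion
      (show StarAlgebra.adjoin ℂ (projGen S) ≤ ES S from
        StarSubalgebra.le_topologicalClosure _) with hιdef
    set p' : ↥(ES S) := ι ⟨p, hpmem⟩ with hp'def
    refine ⟨p' - τ p', hq, ?_⟩
    have hd1 : dist f p' < ε/3 := by
      rw [Subtype.dist_eq]
      exact hpdist
    have hd2 : ‖τ p'‖ < ε/3 := by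
      have he : τ p' = τ (p' - f) := by rw [map_sub, hf0, sub_zero]
      rw [he]
      calc ‖τ (p' - f)‖ ≤ ‖p' - f‖ := tau_norm_le τ hτ _
        _ = dist p' f := (dist_eq_norm _ _).symm
        _ = dist f p' := dist_comm _ _
        _ < ε/3 := hd1
    calc dist f (p' - τ p') = ‖(f - p') + τ p'‖ := by
          rw [dist_eq_norm]
          congr 1
          abel
      _ ≤ ‖f - p'‖ + ‖τ p'‖ := norm_add_le _ _
      _ = dist f p' + ‖τ p'‖ := by rw [dist_eq_norm]
      _ < ε/3 + ε/3 := by exact add_lt_add hd1 hd2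
      _ < ε := by linarith
  · -- closed ideal ⊆ kernel
    refine closure_minimal (J_subset_ker ha τ hτ) ?_
    have : {f : ↥(ES S) | τ f = 0} = τ ⁻¹' {0} := rfl
    rw [this]
    exact (isClosed_singleton).preimage (tau_continuous τ hτ)
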